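/- Consequently, if F satisfies the forward Euler monotonicity condition ‖u + h F(u)‖ ≤ ‖u‖ for 0 ≤ h ≤ Δt_FE and G satisfies the second-derivative condition ‖u + h² G(u)‖ ≤ ‖u‖ for 0 ≤ h ≤ K̃·Δt_FE, then the Taylor series step satisfies ‖u + h F(u) + (1/2) h² G(u)‖ ≤ ‖u‖ for all 0 ≤ h ≤ K·Δt_FE where K = K̃(√(K̃²+2) − K̃). -/

import Mathlib

/-- If `F` satisfies the forward Euler condition up to `dtFE` and `G`
satisfies the second-derivative condition up to `K̃ · dtFE`, then the Taylor series
step is monotone for `0 ≤ h ≤ K · dtFE` with `K = K̃(√(K̃² + 2) − K̃)`. -/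
theorem taylor_condition_from_FE_and_SD
    {V : Type*} [AddCommGroup V] [Module ℝ V]
    (N : V → ℝ)
    (hadd : ∀ v w : V, N (v + w) ≤ N v + N w)
    (hhom : ∀ (c : ℝ) (v : V), N (c • v) = |c| * N v)
    (F G : V → V) (dtFE Kt : ℝ) (hdtFE : 0 < dtFE) (hKt : 0 < Kt)
    (hFE : ∀ (v : V) (h : ℝ), 0 ≤ h → h ≤ dtFE → N (v + h • F v) ≤ N v)
    (hSD : ∀ (v : V) (h : ℝ), 0 ≤ h → h ≤ Kt * dtFE → N (v + (h^2) • G v) ≤ N v) :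
    ∀ (u : V) (h : ℝ), 0 ≤ h → h ≤ (Kt * (Real.sqrt (Kt^2 + 2) - Kt)) * dtFE →
      N (u + h • F u + ((1/2) * h^2) • G u) ≤ N u := by
  intro u h hh0 hhK
  rcases eq_or_lt_of_le hh0 with hz | hpos
  · simp [← hz]
  set s := Real.sqrt (Kt^2 + 2) with hs_def
  have hs0 : 0 ≤ s := Real.sqrt_nonneg _
  have hs2 : s^2 = Kt^2 + 2 := Real.sq_sqrt (by positivity)
  have hsK : Kt < s := by nlinarith
  have hK1 : Kt * (s - Kt) < 1 := by nlinarith [sq_nonneg (Kt*s - Kt^2 - 1)]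
  set α := h / dtFE with hα_def
  have hα0 : 0 < α := div_pos hpos hdtFE
  have hα1 : α < 1 := by
    rw [hα_def, div_lt_one hdtFE]
    nlinarith
  set β := 1 - α with hβ_def
  have hβ0 : 0 < β := by simp [hβ_def]; linarith
  have hαβ : α + β = 1 := by ring
  have hid : (Kt*(s-Kt)*dtFE)^2 + 2*Kt^2*dtFE*(Kt*(s-Kt)*dtFE)
      = 2*Kt^2*dtFE*dtFE := by linear_combination (Kt^2*dtFE^2) * hs2
  have hb1 : h * h ≤ (Kt*(s-Kt)*dtFE) * (Kt*(s-Kt)*dtFE) :=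
    mul_self_le_mul_self hh0 hhK
  have hb2 : 2*Kt^2*dtFE*h ≤ 2*Kt^2*dtFE*(Kt*(s-Kt)*dtFE) :=
    mul_le_mul_of_nonneg_left hhK (by positivity)
  have hq : h^2 ≤ 2 * Kt^2 * dtFE * (dtFE - h) := by nlinarith [hb1, hb2, hid]
  set h' := h / Real.sqrt (2*β) with h'_def
  have h'0 : 0 ≤ h' := by positivity
  have h'sq : h'^2 = h^2 / (2*β) := by
    rw [h'_def, div_pow, Real.sq_sqrt (by positivity)]
  have hβval : 2 * β = 2 * (dtFE - h) / dtFE := by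
    rw [hβ_def, hα_def]; field_simp
  have h'le : h' ≤ Kt * dtFE := by
    have heq : (Kt * dtFE)^2 * (2*β) = 2 * Kt^2 * dtFE * (dtFE - h) := by
      rw [hβval]; field_simp
    have hsq : h'^2 ≤ (Kt * dtFE)^2 := by
      rw [h'sq, div_le_iff₀ (by positivity), heq]; exact hq
    nlinarith [mul_pos hKt hdtFE]
  have hdiv : h / α = dtFE := by
    rw [hα_def]
    field_simp
  have key : u + h • F u + ((1/2) * h^2) • G u
      = α • (u + (h/α) • F u) + β • (u + (h'^2) • G u) := by
    have hαne : α ≠ 0 := ne_of_gt hα0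
    have hβne : β ≠ 0 := ne_of_gt hβ0
    have e1 : α * (h/α) = h := by field_simp
    have e2 : β * h'^2 = (1/2) * h^2 := by
      rw [h'sq]; field_simp
    have huu : α • u + β • u = u := by rw [← add_smul, hαβ, one_smul]
    calc u + h • F u + ((1/2) * h^2) • G u
        = (α • u + β • u) + h • F u + ((1/2) * h^2) • G u := by rw [huu]
      _ = α • (u + (h/α) • F u) + β • (u + (h'^2) • G u) := by
          rw [smul_add, smul_add, smul_smul, smul_smul, e1, e2]; abel
  rw [key]
  have hFEu : N (u + (h/α) • F u) ≤ N u := by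
    rw [hdiv]; exact hFE u dtFE (le_of_lt hdtFE) le_rfl
  have hSDu : N (u + (h'^2) • G u) ≤ N u := hSD u h' h'0 h'le
  calc N (α • (u + (h/α) • F u) + β • (u + (h'^2) • G u))
      ≤ N (α • (u + (h/α) • F u)) + N (β • (u + (h'^2) • G u)) := hadd _ _
    _ = α * N (u + (h/α) • F u) + β * N (u + (h'^2) • G u) := by
        rw [hhom, hhom, abs_of_pos hα0, abs_of_pos hβ0]
    _ ≤ α * N u + β * N u :=
        add_le_add (mul_le_mul_of_nonneg_left hFEu hα0.le)
          (mul_le_mul_of_nonneg_left hSDu hβ0.le)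
    _ = N u := by rw [← add_mul, hαβ, one_mul]
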